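/- Let g : ℝ² → ℝ be C², u(x,y,z) = z - g(x,y), X = ∂x - (y/2)∂z, Y = ∂y + (x/2)∂z. Suppose γ : (-ε, ε) → ℝ² is differentiable with γ(0) = (0,0), and every point (γ₁(t), γ₂(t), g(γ(t))) is a characteristic point, i.e. gₓ(γ(t)) + γ₂(t)/2 = 0 and g_y(γ(t)) - γ₁(t)/2 = 0 for all t. Then the vector (γ₁'(0), γ₂'(0)) lies in the kernel of the matrix [[gₓₓ(0,0), gₓy(0,0) + 1/2],[gₓy(0,0) - 1/2, g_yy(0,0)]]. In particular, if γ'(0) ≠ 0, the origin is a degenerate characteristic point. -/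

import Mathlib

noncomputable def qdx (g : ℝ × ℝ → ℝ) (q : ℝ × ℝ) : ℝ := fderiv ℝ g q (1, 0)
noncomputable def qdy (g : ℝ × ℝ → ℝ) (q : ℝ × ℝ) : ℝ := fderiv ℝ g q (0, 1)

/-- A differentiable curve of characteristic points of the graph surface {z = g(x,y)} through
the origin has velocity in the kernel of [[gₓₓ, gₓy + 1/2],[gₓy - 1/2, g_yy]](0,0); in
particular if the velocity is nonzero, the origin is a degenerate characteristic point. -/
theorem curve_of_char_points_degenerate (g : ℝ × ℝ → ℝ) (hg : ContDiff ℝ 2 g)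
    (ε : ℝ) (hε : 0 < ε) (γ : ℝ → ℝ × ℝ) (v : ℝ × ℝ)
    (hγ0 : γ 0 = (0, 0)) (hd : HasDerivAt γ v 0)
    (hchar : ∀ t ∈ Set.Ioo (-ε) ε,
      qdx g (γ t) + (γ t).2 / 2 = 0 ∧ qdy g (γ t) - (γ t).1 / 2 = 0) :
    (!![qdx (qdx g) (0, 0), qdy (qdx g) (0, 0) + 1/2;
        qdy (qdx g) (0, 0) - 1/2, qdy (qdy g) (0, 0)]).mulVec ![v.1, v.2] = 0 ∧
    (v ≠ 0 → Matrix.det !![qdx (qdx g) (0, 0), qdy (qdx g) (0, 0) + 1/2;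
        qdy (qdx g) (0, 0) - 1/2, qdy (qdy g) (0, 0)] = 0) := by
  have hIoo : Set.Ioo (-ε) ε ∈ nhds (0:ℝ) := Ioo_mem_nhds (by linarith) hε
  have hfd : ∀ q, HasFDerivAt g (fderiv ℝ g q) q := fun q =>
    ((hg.differentiable (by norm_num)) q).hasFDerivAt
  have hf' : ContDiff ℝ 1 (fderiv ℝ g) := hg.fderiv_right (by norm_num)
  have hD2 : HasFDerivAt (fderiv ℝ g) (fderiv ℝ (fderiv ℝ g) ((0:ℝ),(0:ℝ))) ((0:ℝ),(0:ℝ)) :=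
    ((hf'.differentiable one_ne_zero) ((0:ℝ),(0:ℝ))).hasFDerivAt
  set D2 := fderiv ℝ (fderiv ℝ g) ((0:ℝ),(0:ℝ)) with hD2def
  have hsymm : ∀ w z : ℝ × ℝ, D2 w z = D2 z w := fun w z =>
    second_derivative_symmetric (fun y => hfd y) hD2 w z
  have hqdx : HasFDerivAt (qdx g)
      ((ContinuousLinearMap.apply ℝ ℝ ((1:ℝ),(0:ℝ))).comp D2) ((0:ℝ),(0:ℝ)) :=
    (ContinuousLinearMap.apply ℝ ℝ ((1:ℝ),(0:ℝ))).hasFDerivAt.comp _ hD2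
  have hqdy : HasFDerivAt (qdy g)
      ((ContinuousLinearMap.apply ℝ ℝ ((0:ℝ),(1:ℝ))).comp D2) ((0:ℝ),(0:ℝ)) :=
    (ContinuousLinearMap.apply ℝ ℝ ((0:ℝ),(1:ℝ))).hasFDerivAt.comp _ hD2
  have hqdx' : HasFDerivAt (qdx g)
      ((ContinuousLinearMap.apply ℝ ℝ ((1:ℝ),(0:ℝ))).comp D2) (γ 0) := hγ0 ▸ hqdx
  have hqdy' : HasFDerivAt (qdy g)
      ((ContinuousLinearMap.apply ℝ ℝ ((0:ℝ),(1:ℝ))).comp D2) (γ 0) := hγ0 ▸ hqdy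
  have h1 : HasDerivAt (fun t => qdx g (γ t)) (D2 v (1,0)) 0 := by
    have := hqdx'.comp_hasDerivAt 0 hd; simp at this; exact this
  have h2 : HasDerivAt (fun t => qdy g (γ t)) (D2 v (0,1)) 0 := by
    have := hqdy'.comp_hasDerivAt 0 hd; simp at this; exact this
  have hfst : HasDerivAt (fun t => (γ t).1) v.1 0 := by
    have := (ContinuousLinearMap.fst ℝ ℝ ℝ).hasFDerivAt.comp_hasDerivAt 0 hd; simp at this; exact this
  have hsnd : HasDerivAt (fun t => (γ t).2) v.2 0 := by
    have := (ContinuousLinearMap.snd ℝ ℝ ℝ).hasFDerivAt.comp_hasDerivAt 0 hd; simp at this; exact this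
  have hz1 : HasDerivAt (fun t => qdx g (γ t) + (γ t).2 / 2) (D2 v (1,0) + v.2/2) 0 :=
    h1.add (hsnd.div_const 2)
  have hz2 : HasDerivAt (fun t => qdy g (γ t) - (γ t).1 / 2) (D2 v (0,1) - v.1/2) 0 :=
    h2.sub (hfst.div_const 2)
  have hz1' : HasDerivAt (fun t => qdx g (γ t) + (γ t).2 / 2) 0 0 := by
    apply (hasDerivAt_const (0:ℝ) (0:ℝ)).congr_of_eventuallyEq
    filter_upwards [hIoo] with t ht
    exact (hchar t ht).1
  have hz2' : HasDerivAt (fun t => qdy g (γ t) - (γ t).1 / 2) 0 0 := by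
    apply (hasDerivAt_const (0:ℝ) (0:ℝ)).congr_of_eventuallyEq
    filter_upwards [hIoo] with t ht
    exact (hchar t ht).2
  have E1 : D2 v (1,0) + v.2/2 = 0 := hz1.unique hz1'
  have E2 : D2 v (0,1) - v.1/2 = 0 := hz2.unique hz2'
  have hv : v = v.1 • ((1:ℝ),(0:ℝ)) + v.2 • ((0:ℝ),(1:ℝ)) := by
    ext <;> simp
  have ha : qdx (qdx g) (0,0) = D2 (1,0) (1,0) := by
    rw [qdx, hqdx.fderiv]; rfl
  have hb : qdy (qdx g) (0,0) = D2 (0,1) (1,0) := by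
    rw [qdy, hqdx.fderiv]; rfl
  have hdd : qdy (qdy g) (0,0) = D2 (0,1) (0,1) := by
    rw [qdy, hqdy.fderiv]; rfl
  have hexp1 : D2 v (1,0) = v.1 * D2 (1,0) (1,0) + v.2 * D2 (0,1) (1,0) := by
    conv_lhs => rw [hv]
    simp only [map_add, map_smul, ContinuousLinearMap.add_apply,
      ContinuousLinearMap.coe_smul', Pi.smul_apply, smul_eq_mul]
  have hexp2 : D2 v (0,1) = v.1 * D2 (0,1) (1,0) + v.2 * D2 (0,1) (0,1) := by
    conv_lhs => rw [hv]
    rw [← hsymm (1,0) (0,1)]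
    simp only [map_add, map_smul, ContinuousLinearMap.add_apply,
      ContinuousLinearMap.coe_smul', Pi.smul_apply, smul_eq_mul]
  have E1' : v.1 * D2 (1,0) (1,0) + v.2 * D2 (0,1) (1,0) + v.2/2 = 0 := by
    rw [← hexp1]; exact E1
  have E2' : v.1 * D2 (0,1) (1,0) + v.2 * D2 (0,1) (0,1) - v.1/2 = 0 := by
    rw [← hexp2]; exact E2
  set a := D2 (1,0) (1,0)
  set b := D2 (0,1) (1,0)
  set d := D2 (0,1) (0,1)
  have key1 : a * v.1 + (b + 1/2) * v.2 = 0 := by linarith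
  have key2 : (b - 1/2) * v.1 + d * v.2 = 0 := by linarith
  have ha0 : qdx (qdx g) 0 = a := ha
  have hb0 : qdy (qdx g) 0 = b := hb
  have hd0 : qdy (qdy g) 0 = d := hdd
  constructor
  · funext i
    fin_cases i <;>
      simp [Matrix.mulVec, dotProduct, Fin.sum_univ_two, ha0, hb0, hd0, ha, hb, hdd] <;> linarith
  · intro hvne
    have hv1 : v.1 ≠ 0 ∨ v.2 ≠ 0 := by
      by_contra h
      push_neg at h
      exact hvne (Prod.ext h.1 h.2)
    rw [Matrix.det_fin_two_of, ha, hb, hdd]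
    rcases hv1 with h | h
    · have hz : (a * d - (b + 1/2) * (b - 1/2)) * v.1 = 0 := by
        linear_combination d * key1 - (b + 1/2) * key2
      have := (mul_eq_zero.mp hz).resolve_right h
      linarith
    · have hz : (a * d - (b + 1/2) * (b - 1/2)) * v.2 = 0 := by
        linear_combination a * key2 - (b - 1/2) * key1
      have := (mul_eq_zero.mp hz).resolve_right h
      linarith
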